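/- Let D ≥ 1 and let f, f̂: ℝ^D → ℝ^D be differentiable, with f a diffeomorphism whose inverse f⁻¹ is differentiable. Suppose all entries of the Jacobian of f are bounded in absolute value by B_∂f, all entries of the Jacobian of f⁻¹ are bounded in absolute value by B_∂f⁻¹, and for each j the gradient of the j-th component of f⁻¹ satisfies |∂f⁻¹_j/∂z_k(z) − ∂f⁻¹_j/∂z_k(z')| ≤ H_j ‖z − z'‖₂ for all k and all z, z' (Hölder-(1,1) condition with constant H_j). Then for every s ∈ ℝ^D, ‖D(f⁻¹∘f)(s) − D(f⁻¹∘f̂)(s)‖_op ≤ D^{3/2} B_∂f (Σ_{j=1}^D H_j) Σ_{j=1}^D |f_j(s) − f̂_j(s)| + D^{3/2} B_∂f⁻¹ Σ_{k=1}^D Σ_{j=1}^D |∂f_j/∂s_k(s) − ∂f̂_j/∂s_k(s)|, where ‖·‖_op is the operator norm induced by the Euclidean vector norm and D(·)(s) denotes the Jacobian matrix at s. -/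

import Mathlib

/-- The Jacobian matrix of a map `F : ℝ^D → ℝ^D` at a point `s`, with entries
`(j,k) ↦ ∂F_j/∂s_k (s)`. -/
noncomputable def jmat {D : ℕ} (F : (Fin D → ℝ) → (Fin D → ℝ)) (s : Fin D → ℝ) :
    Matrix (Fin D) (Fin D) ℝ :=
  Matrix.of fun j k => fderiv ℝ F s (Pi.single k 1) j

/-- The operator norm of a real matrix induced by the Euclidean vector norm. -/
noncomputable def opNormR {D : ℕ} (M : Matrix (Fin D) (Fin D) ℝ) : ℝ :=
  ‖Matrix.toEuclideanCLM (𝕜 := ℝ) M‖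

-- helper lemmas
lemma aux_sqrt_sum_sq_le_sum_abs {ι : Type*} [Fintype ι] (a : ι → ℝ) :
    Real.sqrt (∑ i, a i ^ 2) ≤ ∑ i, |a i| := by
  have h1 : ∑ i, a i ^ 2 ≤ (∑ i, |a i|) ^ 2 := by
    have := Finset.sum_sq_le_sq_sum_of_nonneg (s := Finset.univ) (f := fun i => |a i|)
      (fun i _ => abs_nonneg _)
    simpa [sq_abs] using this
  calc Real.sqrt (∑ i, a i ^ 2) ≤ Real.sqrt ((∑ i, |a i|) ^ 2) := Real.sqrt_le_sqrt h1
    _ = ∑ i, |a i| := Real.sqrt_sq (Finset.sum_nonneg fun i _ => abs_nonneg _)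

lemma aux_clm_apply {D : ℕ} (L : (Fin D → ℝ) →L[ℝ] (Fin D → ℝ)) (v : Fin D → ℝ) (j : Fin D) :
    L v j = ∑ i, v i * L (Pi.single i 1) j := by
  have hv : v = ∑ i, v i • (Pi.single i (1:ℝ) : Fin D → ℝ) := by
    funext m
    simp [Finset.sum_apply, Pi.single_apply]
  conv_lhs => rw [hv]
  rw [map_sum]
  simp [Finset.sum_apply]


/-- Jacobian difference bound: with entrywise bounds `B_∂f`, `B_∂f⁻¹` on the Jacobians of
`f` and `f⁻¹` and a Hölder-`(1,1)` condition (constants `H_j`) on the gradients of the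
components of `f⁻¹`, the operator norm of `D(f⁻¹∘f)(s) − D(f⁻¹∘f̂)(s)` is bounded by
`D^{3/2} B_∂f (Σ_j H_j) Σ_j |f_j(s) − f̂_j(s)|
  + D^{3/2} B_∂f⁻¹ Σ_k Σ_j |∂f_j/∂s_k(s) − ∂f̂_j/∂s_k(s)|`. -/
theorem stmt15 (D : ℕ) (hD : 1 ≤ D) (Bdf Bdg : ℝ) (H : Fin D → ℝ)
    (f g fhat : (Fin D → ℝ) → (Fin D → ℝ))
    (hfd : Differentiable ℝ f) (hgd : Differentiable ℝ g) (hfhd : Differentiable ℝ fhat)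
    (hgf : ∀ s, g (f s) = s) (hfg : ∀ z, f (g z) = z)
    (hBdf : ∀ (s : Fin D → ℝ) (j k : Fin D), |fderiv ℝ f s (Pi.single k 1) j| ≤ Bdf)
    (hBdg : ∀ (z : Fin D → ℝ) (j k : Fin D), |fderiv ℝ g z (Pi.single k 1) j| ≤ Bdg)
    (hHold : ∀ (j k : Fin D) (z z' : Fin D → ℝ),
      |fderiv ℝ g z (Pi.single k 1) j - fderiv ℝ g z' (Pi.single k 1) j| ≤
        H j * Real.sqrt (∑ i, (z i - z' i) ^ 2))
    (s : Fin D → ℝ) :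
    opNormR (jmat (fun x => g (f x)) s - jmat (fun x => g (fhat x)) s) ≤
      (D : ℝ) * Real.sqrt D * Bdf * (∑ j, H j) * (∑ j, |f s j - fhat s j|) +
        (D : ℝ) * Real.sqrt D * Bdg *
          ∑ k, ∑ j, |fderiv ℝ f s (Pi.single k 1) j - fderiv ℝ fhat s (Pi.single k 1) j| := by
  classical
  have j0 : Fin D := ⟨0, hD⟩
  -- nonnegativity facts
  have hBdf0 : 0 ≤ Bdf := le_trans (abs_nonneg _) (hBdf s j0 j0)
  have hBdg0 : 0 ≤ Bdg := le_trans (abs_nonneg _) (hBdg s j0 j0)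
  have hH0 : ∀ j, 0 ≤ H j := by
    intro j
    have h := hHold j j0 (Pi.single j0 1) 0 
    have hs : Real.sqrt (∑ i, ((Pi.single j0 1 : Fin D → ℝ) i - (0 : Fin D → ℝ) i) ^ 2) = 1 := by
      have : (∑ i, ((Pi.single j0 1 : Fin D → ℝ) i - (0 : Fin D → ℝ) i) ^ 2) = 1 := by
        simp [Pi.single_apply, sq]
      rw [this, Real.sqrt_one]
    rw [hs, mul_one] at h
    exact le_trans (abs_nonneg _) h
  set T : ℝ := ∑ j, |f s j - fhat s j| with hT
  have hT0 : 0 ≤ T := Finset.sum_nonneg fun _ _ => abs_nonneg _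
  set c : Fin D → ℝ := fun k => ∑ i, |fderiv ℝ f s (Pi.single k 1) i -
      fderiv ℝ fhat s (Pi.single k 1) i| with hc
  have hc0 : ∀ k, 0 ≤ c k := fun k => Finset.sum_nonneg fun _ _ => abs_nonneg _
  -- Jacobian entries of compositions
  set M : Matrix (Fin D) (Fin D) ℝ :=
      jmat (fun x => g (f x)) s - jmat (fun x => g (fhat x)) s with hM
  have hcomp : ∀ j k : Fin D, jmat (fun x => g (f x)) s j k =
      ∑ i, fderiv ℝ f s (Pi.single k 1) i * fderiv ℝ g (f s) (Pi.single i 1) j := by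
    intro j k
    have h1 : fderiv ℝ (fun x => g (f x)) s =
        (fderiv ℝ g (f s)).comp (fderiv ℝ f s) := fderiv_comp s (hgd (f s)) (hfd s)
    show fderiv ℝ (fun x => g (f x)) s (Pi.single k 1) j = _
    rw [h1]
    exact aux_clm_apply (fderiv ℝ g (f s)) (fderiv ℝ f s (Pi.single k 1)) j
  have hcomp' : ∀ j k : Fin D, jmat (fun x => g (fhat x)) s j k =
      ∑ i, fderiv ℝ fhat s (Pi.single k 1) i * fderiv ℝ g (fhat s) (Pi.single i 1) j := by
    intro j k
    have h1 : fderiv ℝ (fun x => g (fhat x)) s =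
        (fderiv ℝ g (fhat s)).comp (fderiv ℝ fhat s) := fderiv_comp s (hgd (fhat s)) (hfhd s)
    show fderiv ℝ (fun x => g (fhat x)) s (Pi.single k 1) j = _
    rw [h1]
    exact aux_clm_apply (fderiv ℝ g (fhat s)) (fderiv ℝ fhat s (Pi.single k 1)) j
  -- entrywise bound
  have hsqrtT : Real.sqrt (∑ i, (f s i - fhat s i) ^ 2) ≤ T :=
    aux_sqrt_sum_sq_le_sum_abs _
  have hentry : ∀ j k : Fin D, |M j k| ≤ (D : ℝ) * Bdf * H j * T + Bdg * c k := by
    intro j k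
    have hMjk : M j k = ∑ i,
        ((fderiv ℝ g (f s) (Pi.single i 1) j - fderiv ℝ g (fhat s) (Pi.single i 1) j) *
            fderiv ℝ f s (Pi.single k 1) i +
          fderiv ℝ g (fhat s) (Pi.single i 1) j *
            (fderiv ℝ f s (Pi.single k 1) i - fderiv ℝ fhat s (Pi.single k 1) i)) := by
      rw [hM]
      show jmat (fun x => g (f x)) s j k - jmat (fun x => g (fhat x)) s j k = _
      rw [hcomp j k, hcomp' j k, ← Finset.sum_sub_distrib]
      congr 1; funext i; ring
    rw [hMjk]
    calc |∑ i, _| ≤ ∑ i,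
        |(fderiv ℝ g (f s) (Pi.single i 1) j - fderiv ℝ g (fhat s) (Pi.single i 1) j) *
            fderiv ℝ f s (Pi.single k 1) i +
          fderiv ℝ g (fhat s) (Pi.single i 1) j *
            (fderiv ℝ f s (Pi.single k 1) i - fderiv ℝ fhat s (Pi.single k 1) i)| :=
          Finset.abs_sum_le_sum_abs _ _
      _ ≤ ∑ i, (H j * T * Bdf +
            Bdg * |fderiv ℝ f s (Pi.single k 1) i - fderiv ℝ fhat s (Pi.single k 1) i|) := by
          apply Finset.sum_le_sum
          intro i _
          calc _ ≤ |(fderiv ℝ g (f s) (Pi.single i 1) j -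
                  fderiv ℝ g (fhat s) (Pi.single i 1) j) * fderiv ℝ f s (Pi.single k 1) i| +
                |fderiv ℝ g (fhat s) (Pi.single i 1) j *
                  (fderiv ℝ f s (Pi.single k 1) i - fderiv ℝ fhat s (Pi.single k 1) i)| :=
              abs_add_le _ _
            _ ≤ H j * T * Bdf +
                Bdg * |fderiv ℝ f s (Pi.single k 1) i - fderiv ℝ fhat s (Pi.single k 1) i| := by
              rw [abs_mul, abs_mul]
              gcongr
              · exact mul_nonneg (hH0 j) hT0
              · calc |fderiv ℝ g (f s) (Pi.single i 1) j -
                    fderiv ℝ g (fhat s) (Pi.single i 1) j| ≤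
                      H j * Real.sqrt (∑ m, (f s m - fhat s m) ^ 2) := hHold j i _ _
                  _ ≤ H j * T := by gcongr; exact hH0 j
              · exact hBdf s i k
              · exact hBdg (fhat s) j i
      _ = (D : ℝ) * Bdf * H j * T + Bdg * c k := by
          rw [Finset.sum_add_distrib, Finset.sum_const, ← Finset.mul_sum]
          simp only [Finset.card_univ, Fintype.card_fin, nsmul_eq_mul, hc]
          ring
  -- pass to operator norm
  have hRHS0 : 0 ≤ (D : ℝ) * Real.sqrt D * Bdf * (∑ j, H j) * T +
      (D : ℝ) * Real.sqrt D * Bdg * ∑ k, c k := by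
    have h1 : 0 ≤ ∑ j, H j := Finset.sum_nonneg fun j _ => hH0 j
    have h2 : 0 ≤ ∑ k, c k := Finset.sum_nonneg fun k _ => hc0 k
    positivity
  show ‖Matrix.toEuclideanCLM (𝕜 := ℝ) M‖ ≤ _
  apply ContinuousLinearMap.opNorm_le_bound _ hRHS0
  intro x
  set y := Matrix.toEuclideanCLM (𝕜 := ℝ) M x with hy
  have hyj : ∀ j, y j = ∑ k, M j k * x k := by
    intro j
    have := Matrix.ofLp_toEuclideanCLM (n := Fin D) (𝕜 := ℝ) M x
    have h2 := congrFun this j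
    rw [hy]; exact h2
  have hxk : ∀ k, |x k| ≤ ‖x‖ := by
    intro k
    have h1 : ‖x‖ = Real.sqrt (∑ i, ‖x i‖ ^ 2) := EuclideanSpace.norm_eq x
    rw [h1]
    have : |x k| = Real.sqrt ((x k) ^ 2) := (Real.sqrt_sq_eq_abs _).symm
    rw [this]
    apply Real.sqrt_le_sqrt
    have : (x k) ^ 2 = ‖x k‖ ^ 2 := by simp [Real.norm_eq_abs, sq_abs]
    rw [this]
    exact Finset.single_le_sum (f := fun i => ‖x i‖ ^ 2) (fun i _ => by positivity)
      (Finset.mem_univ k)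
  have hP : ∑ k, |x k| ≤ Real.sqrt D * ‖x‖ := by
    have h1 : (∑ k, |x k|) ^ 2 ≤ (D : ℝ) * ∑ k, |x k| ^ 2 := by
      have := sq_sum_le_card_mul_sum_sq (s := (Finset.univ : Finset (Fin D)))
        (f := fun k => |x k|)
      simpa using this
    have h2 : ∑ k, |x k| = Real.sqrt ((∑ k, |x k|) ^ 2) :=
      (Real.sqrt_sq (Finset.sum_nonneg fun _ _ => abs_nonneg _)).symm
    rw [h2]
    calc Real.sqrt ((∑ k, |x k|) ^ 2) ≤ Real.sqrt ((D : ℝ) * ∑ k, |x k| ^ 2) :=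
        Real.sqrt_le_sqrt h1
      _ = Real.sqrt D * Real.sqrt (∑ k, |x k| ^ 2) := Real.sqrt_mul (by positivity) _
      _ = Real.sqrt D * ‖x‖ := by
          simp [EuclideanSpace.norm_eq, Real.norm_eq_abs, sq_abs]
  have hyabs : ∀ j, |y j| ≤ ((D:ℝ) * Bdf * H j * T) * (∑ k, |x k|) + Bdg * ∑ k, c k * |x k| := by
    intro j
    rw [hyj j]
    calc |∑ k, M j k * x k| ≤ ∑ k, |M j k * x k| := Finset.abs_sum_le_sum_abs _ _
      _ ≤ ∑ k, (((D:ℝ) * Bdf * H j * T) * |x k| + Bdg * (c k * |x k|)) := by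
          apply Finset.sum_le_sum
          intro k _
          rw [abs_mul]
          calc |M j k| * |x k| ≤ ((D : ℝ) * Bdf * H j * T + Bdg * c k) * |x k| :=
              mul_le_mul_of_nonneg_right (hentry j k) (abs_nonneg _)
            _ = ((D:ℝ) * Bdf * H j * T) * |x k| + Bdg * (c k * |x k|) := by ring
      _ = ((D:ℝ) * Bdf * H j * T) * (∑ k, |x k|) + Bdg * ∑ k, c k * |x k| := by
          rw [Finset.sum_add_distrib, ← Finset.mul_sum, ← Finset.mul_sum]
  have hynorm : ‖y‖ ≤ ∑ j, |y j| := by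
    rw [EuclideanSpace.norm_eq]
    have : ∀ j, ‖y j‖ ^ 2 = (y j) ^ 2 := fun j => by simp [Real.norm_eq_abs, sq_abs]
    calc Real.sqrt (∑ j, ‖y j‖ ^ 2) = Real.sqrt (∑ j, (y j) ^ 2) := by
          congr 1; exact Finset.sum_congr rfl fun j _ => this j
      _ ≤ ∑ j, |y j| := aux_sqrt_sum_sq_le_sum_abs _
  have hQ : ∑ k, c k * |x k| ≤ (∑ k, c k) * ‖x‖ := by
    rw [Finset.sum_mul]
    apply Finset.sum_le_sum
    intro k _
    exact mul_le_mul_of_nonneg_left (hxk k) (hc0 k)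
  have hsqrtD1 : (1 : ℝ) ≤ Real.sqrt D := by
    rw [show (1:ℝ) = Real.sqrt 1 from Real.sqrt_one.symm]
    exact Real.sqrt_le_sqrt (by exact_mod_cast hD)
  calc ‖y‖ ≤ ∑ j, |y j| := hynorm
    _ ≤ ∑ j, (((D:ℝ) * Bdf * H j * T) * (∑ k, |x k|) + Bdg * ∑ k, c k * |x k|) :=
        Finset.sum_le_sum fun j _ => hyabs j
    _ = ((D:ℝ) * Bdf * T * ∑ j, H j) * (∑ k, |x k|) +
        (D : ℝ) * (Bdg * ∑ k, c k * |x k|) := by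
        rw [Finset.sum_add_distrib, Finset.sum_const, Finset.card_univ, Fintype.card_fin,
          nsmul_eq_mul, ← Finset.sum_mul]
        congr 1
        congr 1
        rw [Finset.mul_sum]
        apply Finset.sum_congr rfl
        intro j _; ring
    _ ≤ ((D:ℝ) * Bdf * T * ∑ j, H j) * (Real.sqrt D * ‖x‖) +
        (D : ℝ) * (Bdg * ((∑ k, c k) * ‖x‖)) := by
        have hA0 : 0 ≤ (D:ℝ) * Bdf * T * ∑ j, H j := by
          have : 0 ≤ ∑ j, H j := Finset.sum_nonneg fun j _ => hH0 j
          positivity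
        apply add_le_add
        · exact mul_le_mul_of_nonneg_left hP hA0
        · exact mul_le_mul_of_nonneg_left (mul_le_mul_of_nonneg_left hQ hBdg0) (by positivity)
    _ ≤ ((D : ℝ) * Real.sqrt D * Bdf * (∑ j, H j) * T +
        (D : ℝ) * Real.sqrt D * Bdg * ∑ k, c k) * ‖x‖ := by
        have h2 : 0 ≤ ∑ k, c k := Finset.sum_nonneg fun k _ => hc0 k
        have key : (D : ℝ) * (Bdg * ((∑ k, c k) * ‖x‖)) ≤
            ((D : ℝ) * Real.sqrt D * Bdg * ∑ k, c k) * ‖x‖ := by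
          have : (D : ℝ) * (Bdg * ((∑ k, c k) * ‖x‖)) =
              ((D : ℝ) * 1 * Bdg * ∑ k, c k) * ‖x‖ := by ring
          rw [this]
          gcongr
        have key1 : ((D:ℝ) * Bdf * T * ∑ j, H j) * (Real.sqrt D * ‖x‖) =
            ((D : ℝ) * Real.sqrt D * Bdf * (∑ j, H j) * T) * ‖x‖ := by ring
        rw [key1, add_mul]
        exact add_le_add le_rfl key
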